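/- Let M be a row diagonal tensor of even order r and dimension n with majorization matrix M̃. Then M is a strictly semipositive tensor if and only if M̃ is a strictly semimonotone matrix. -/

import Mathlib

open Finset

/-- Action of a real tensor of order `k+1` and dimension `n` (entries indexed by a
leading index and `k` trailing indices) on a vector: `(M u^{k})_i = ∑ m_{i f} ∏ u_{f j}`. -/
def tApply {n k : ℕ} (m : Fin n → (Fin k → Fin n) → ℝ) (u : Fin n → ℝ) (i : Fin n) : ℝ :=
  ∑ f : Fin k → Fin n, m i f * ∏ j, u (f j)

/-- `M` is semipositive: for every nonzero `u ≥ 0` there is `l` with `u l > 0` and `(M u^{r-1})_l ≥ 0`. -/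
def Semipositive {n k : ℕ} (m : Fin n → (Fin k → Fin n) → ℝ) : Prop :=
  ∀ u : Fin n → ℝ, 0 ≤ u → u ≠ 0 → ∃ l, 0 < u l ∧ 0 ≤ tApply m u l

/-- `M` is strictly semipositive. -/
def StrictlySemipositive {n k : ℕ} (m : Fin n → (Fin k → Fin n) → ℝ) : Prop :=
  ∀ u : Fin n → ℝ, 0 ≤ u → u ≠ 0 → ∃ l, 0 < u l ∧ 0 < tApply m u l

/-- A matrix is semimonotone. -/
def Semimonotone {n : ℕ} (A : Fin n → Fin n → ℝ) : Prop :=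
  ∀ z : Fin n → ℝ, 0 ≤ z → z ≠ 0 → ∃ k, 0 < z k ∧ 0 ≤ ∑ j, A k j * z j

/-- A matrix is strictly semimonotone. -/
def StrictlySemimonotone {n : ℕ} (A : Fin n → Fin n → ℝ) : Prop :=
  ∀ z : Fin n → ℝ, 0 ≤ z → z ≠ 0 → ∃ k, 0 < z k ∧ 0 < ∑ j, A k j * z j

/-- `M` is row diagonal: entries vanish unless all trailing indices coincide. -/
def RowDiagonal {n k : ℕ} (m : Fin n → (Fin k → Fin n) → ℝ) : Prop :=
  ∀ i (f : Fin k → Fin n), (¬ ∃ c, ∀ j, f j = c) → m i f = 0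

/-- Majorization matrix `M̃_{ij} = m_{i j ... j}`. -/
def majorization {n k : ℕ} (m : Fin n → (Fin k → Fin n) → ℝ) : Fin n → Fin n → ℝ :=
  fun i j => m i (fun _ => j)

lemma tApply_eq {n k : ℕ} (hk : 0 < k) {m : Fin n → (Fin k → Fin n) → ℝ}
    (hrd : RowDiagonal m) (u : Fin n → ℝ) (i : Fin n) :
    tApply m u i = ∑ j, majorization m i j * u j ^ k := by
  unfold tApply
  rw [← Finset.sum_filter_of_ne (p := fun f : Fin k → Fin n => ∃ c, ∀ j, f j = c)
    (by intro f _ hne; by_contra h; exact hne (by rw [hrd i f h, zero_mul]))]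
  refine Finset.sum_bij' (fun f _ => f ⟨0, hk⟩) (fun c _ => (fun _ => c)) ?_ ?_ ?_ ?_ ?_
  · intro f hf; simp
  · intro c hc; simp; exact ⟨c, fun _ => rfl⟩
  · intro f hf
    simp only [mem_filter] at hf
    obtain ⟨_, c, hc⟩ := hf
    funext j; show f ⟨0, hk⟩ = f j; rw [hc ⟨0, hk⟩, hc j]
  · intro c hc; rfl
  · intro f hf
    simp only [mem_filter] at hf
    obtain ⟨_, c, hc⟩ := hf
    have hfc : f = fun _ => c := funext hc
    subst hfc
    simp [majorization, Finset.prod_const]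

theorem stmt16 (n r : ℕ) (hr : 2 ≤ r) (hre : Even r)
    (m : Fin n → (Fin (r - 1) → Fin n) → ℝ) (hrd : RowDiagonal m) :
    StrictlySemipositive m ↔ StrictlySemimonotone (majorization m) := by
  set k := r - 1 with hkdef
  have hk : 0 < k := by omega
  have hk' : (k : ℝ) ≠ 0 := Nat.cast_ne_zero.mpr hk.ne'
  constructor
  · intro hsp z hz hzne
    set u : Fin n → ℝ := fun j => (z j) ^ ((k : ℝ)⁻¹) with hu
    have hupow : ∀ j, u j ^ k = z j := by
      intro j
      rw [hu]
      rw [← Real.rpow_natCast ((z j) ^ ((k:ℝ)⁻¹)) k, ← Real.rpow_mul (hz j),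
        inv_mul_cancel₀ hk', Real.rpow_one]
    have hu0 : 0 ≤ u := fun j => Real.rpow_nonneg (hz j) _
    have hune : u ≠ 0 := by
      intro h
      apply hzne
      funext j
      have : u j = 0 := congrFun h j
      have := hupow j
      rw [‹u j = 0›, zero_pow hk.ne'] at this
      simpa using this.symm
    obtain ⟨l, hl1, hl2⟩ := hsp u hu0 hune
    rw [tApply_eq hk hrd] at hl2
    refine ⟨l, ?_, ?_⟩
    · have := hupow l
      rw [← this]
      exact pow_pos hl1 k
    · simpa only [hupow] using hl2
  · intro hsm u hu hune
    obtain ⟨l, hl1, hl2⟩ := hsm (fun j => u j ^ k) (fun j => pow_nonneg (hu j) k)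
      (by
        intro h
        apply hune
        funext j
        have : u j ^ k = 0 := congrFun h j
        have := pow_eq_zero_iff hk.ne' |>.mp this
        simpa using this)
    refine ⟨l, ?_, ?_⟩
    · by_contra h
      push_neg at h
      have h0 : u l = 0 := le_antisymm h (hu l)
      rw [h0, zero_pow hk.ne'] at hl1
      exact lt_irrefl 0 hl1
    · rw [tApply_eq hk hrd]; exact hl2
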